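/- Let R ∈ ℝ^{p×p} and let R = Φ Σ Dᵀ be a singular value decomposition, where Φ, D ∈ ℝ^{p×p} are orthogonal and Σ is diagonal with nonnegative entries. Then the matrix exponential of the skew-symmetric block matrix [[0, −Rᵀ],[R, 0]] ∈ ℝ^{2p×2p} is exp_m([[0, −Rᵀ],[R, 0]]) = [[D, 0],[0, Φ]] · [[cos(Σ), −sin(Σ)],[sin(Σ), cos(Σ)]] · [[Dᵀ, 0],[0, Φᵀ]] = [[D cos(Σ) Dᵀ, −D sin(Σ) Φᵀ],[Φ sin(Σ) Dᵀ, Φ cos(Σ) Φᵀ]], where cos and sin are applied entrywise to the diagonal entries of Σ. -/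

import Mathlib

open Matrix NormedSpace

variable {p : ℕ}

/-- The ℝ-algebra hom sending a vector of complex numbers to the corresponding
block matrix of real diagonal matrices. -/
noncomputable def psiAux (p : ℕ) :
    (Fin p → ℂ) →ₐ[ℝ] Matrix (Fin p ⊕ Fin p) (Fin p ⊕ Fin p) ℝ where
  toFun z := Matrix.fromBlocks (Matrix.diagonal fun i => (z i).re)
      (-(Matrix.diagonal fun i => (z i).im))
      (Matrix.diagonal fun i => (z i).im) (Matrix.diagonal fun i => (z i).re)
  map_one' := by
    simp [← Matrix.fromBlocks_one]
  map_mul' x y := by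
    simp only [Pi.mul_apply, Complex.mul_re, Complex.mul_im, Matrix.fromBlocks_multiply,
      Matrix.diagonal_mul_diagonal, Matrix.neg_mul, Matrix.mul_neg, neg_neg,
      ← Matrix.diagonal_neg, ← Matrix.diagonal_add]
    ext i j
    rcases i with i | i <;> rcases j with j | j <;>
      simp [Matrix.diagonal_apply] <;> split <;> ring
  map_zero' := by simp
  map_add' x y := by
    simp only [Pi.add_apply, Complex.add_re, Complex.add_im, ← Matrix.diagonal_add,
      Matrix.fromBlocks_add, neg_add]
  commutes' r := by
    ext i j
    rcases i with i | i <;> rcases j with j | j <;>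
      simp [Matrix.algebraMap_matrix_apply, Matrix.diagonal_apply]

lemma psiAux_apply (p : ℕ) (z : Fin p → ℂ) :
    psiAux p z = Matrix.fromBlocks (Matrix.diagonal fun i => (z i).re)
      (-(Matrix.diagonal fun i => (z i).im))
      (Matrix.diagonal fun i => (z i).im) (Matrix.diagonal fun i => (z i).re) := rfl

lemma exp_rot (p : ℕ) (σ : Fin p → ℝ) :
    exp (Matrix.fromBlocks 0 (-(Matrix.diagonal σ)) (Matrix.diagonal σ) 0) =
      Matrix.fromBlocks (Matrix.diagonal fun i => Real.cos (σ i))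
        (-(Matrix.diagonal fun i => Real.sin (σ i)))
        (Matrix.diagonal fun i => Real.sin (σ i))
        (Matrix.diagonal fun i => Real.cos (σ i)) := by
  letI : SeminormedRing (Matrix (Fin p ⊕ Fin p) (Fin p ⊕ Fin p) ℝ) :=
    Matrix.linftyOpSemiNormedRing
  letI : NormedRing (Matrix (Fin p ⊕ Fin p) (Fin p ⊕ Fin p) ℝ) := Matrix.linftyOpNormedRing
  letI : NormedAlgebra ℝ (Matrix (Fin p ⊕ Fin p) (Fin p ⊕ Fin p) ℝ) :=
    Matrix.linftyOpNormedAlgebra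
  have hcont : Continuous (psiAux p) := (psiAux p).toLinearMap.continuous_of_finiteDimensional
  have h1 : psiAux p (fun i => (σ i : ℂ) * Complex.I) =
      Matrix.fromBlocks 0 (-(Matrix.diagonal σ)) (Matrix.diagonal σ) 0 := by
    rw [psiAux_apply]
    simp
  have h2 := map_exp (psiAux p) hcont (fun i => (σ i : ℂ) * Complex.I)
  rw [h1] at h2
  refine h2.symm.trans ?_
  rw [Pi.exp_def, psiAux_apply]
  simp only [← Complex.exp_eq_exp_ℂ]
  simp [Complex.exp_ofReal_mul_I_re, Complex.exp_ofReal_mul_I_im]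

theorem stmt_14 (p : ℕ) (R Φ D : Matrix (Fin p) (Fin p) ℝ) (σ : Fin p → ℝ)
    (hΦ : Φᵀ * Φ = 1 ∧ Φ * Φᵀ = 1) (hD : Dᵀ * D = 1 ∧ D * Dᵀ = 1)
    (hσ : ∀ i, 0 ≤ σ i)
    (hR : R = Φ * Matrix.diagonal σ * Dᵀ) :
    NormedSpace.exp (Matrix.fromBlocks 0 (-Rᵀ) R 0) =
      Matrix.fromBlocks D 0 0 Φ *
        Matrix.fromBlocks (Matrix.diagonal fun i => Real.cos (σ i))
          (-(Matrix.diagonal fun i => Real.sin (σ i)))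
          (Matrix.diagonal fun i => Real.sin (σ i))
          (Matrix.diagonal fun i => Real.cos (σ i)) *
        Matrix.fromBlocks Dᵀ 0 0 Φᵀ ∧
    NormedSpace.exp (Matrix.fromBlocks 0 (-Rᵀ) R 0) =
      Matrix.fromBlocks (D * (Matrix.diagonal fun i => Real.cos (σ i)) * Dᵀ)
        (-(D * (Matrix.diagonal fun i => Real.sin (σ i)) * Φᵀ))
        (Φ * (Matrix.diagonal fun i => Real.sin (σ i)) * Dᵀ)
        (Φ * (Matrix.diagonal fun i => Real.cos (σ i)) * Φᵀ) := by
  set U : Matrix (Fin p ⊕ Fin p) (Fin p ⊕ Fin p) ℝ := Matrix.fromBlocks D 0 0 Φ with hUdef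
  have hU1 : U * Matrix.fromBlocks Dᵀ 0 0 Φᵀ = 1 := by
    simp [hUdef, Matrix.fromBlocks_multiply, hD.2, hΦ.2, ← Matrix.fromBlocks_one]
  have hU2 : Matrix.fromBlocks Dᵀ 0 0 Φᵀ * U = 1 := by
    simp [hUdef, Matrix.fromBlocks_multiply, hD.1, hΦ.1, ← Matrix.fromBlocks_one]
  have hUunit : IsUnit U := ⟨⟨U, Matrix.fromBlocks Dᵀ 0 0 Φᵀ, hU1, hU2⟩, rfl⟩
  have hinv : U⁻¹ = Matrix.fromBlocks Dᵀ 0 0 Φᵀ := Matrix.inv_eq_right_inv hU1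
  have dneg : ∀ (f : Fin p → ℝ),
      Matrix.diagonal (fun i => -(f i)) = -(Matrix.diagonal f) := fun f => (Matrix.diagonal_neg f).symm
  have hconj : Matrix.fromBlocks 0 (-Rᵀ) R 0 =
      U * Matrix.fromBlocks 0 (-(Matrix.diagonal σ)) (Matrix.diagonal σ) 0 * U⁻¹ := by
    rw [hinv, hUdef]
    simp [Matrix.fromBlocks_multiply, hR, Matrix.transpose_mul, Matrix.diagonal_transpose,
      Matrix.mul_assoc, Matrix.mul_neg, Matrix.neg_mul, ← Matrix.diagonal_neg]
  have key : NormedSpace.exp (Matrix.fromBlocks 0 (-Rᵀ) R 0) =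
      U * Matrix.fromBlocks (Matrix.diagonal fun i => Real.cos (σ i))
          (-(Matrix.diagonal fun i => Real.sin (σ i)))
          (Matrix.diagonal fun i => Real.sin (σ i))
          (Matrix.diagonal fun i => Real.cos (σ i)) * U⁻¹ := by
    rw [hconj, Matrix.exp_conj U _ hUunit, exp_rot]
  refine ⟨by rw [key, hinv], ?_⟩
  rw [key, hinv, hUdef]
  simp [Matrix.fromBlocks_multiply, Matrix.mul_assoc, Matrix.mul_neg, Matrix.neg_mul, ← Matrix.diagonal_neg]
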